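/- arXiv:2009.11556 — 2 statements merged into one kernel-verified Lean document; each statement's English description precedes it below -/
import Mathlib

section
/- If A and B are n × n Hermitian positive semidefinite complex matrices, then for each i ∈ {1,…,n}, λ_i(A)·λ_n(B) ≤ λ_i(AB) ≤ λ_i(A)·λ_1(B), where λ_1 ≥ … ≥ λ_n denote eigenvalues in decreasing order (the eigenvalues of AB are real and nonnegative). -/
open ComplexOrder Polynomial Matrix Finset Module

section charpolyLemmas

variable {m : Type*} [Fintype m] [DecidableEq m] {R : Type*} [CommRing R]
variable {m : Type*} [Fintype m] [DecidableEq m] {R : Type*} [CommRing R]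

lemma myCharpolyRev_mul_comm (A B : Matrix m m R) :
    (A * B).charpolyRev = (B * A).charpolyRev := by
  unfold Matrix.charpolyRev
  have h1 : (X : R[X]) • (A * B).map C = ((X : R[X]) • A.map C) * B.map C := by
    rw [Matrix.map_mul, smul_mul_assoc]
  have h2 : (X : R[X]) • (B * A).map C = B.map C * ((X : R[X]) • A.map C) := by
    rw [Matrix.map_mul, mul_smul_comm]
  rw [h1, h2, Matrix.det_one_sub_mul_comm]

lemma myCharpoly_mul_comm (A B : Matrix m m ℂ) :
    (A * B).charpoly = (B * A).charpoly := by
  have hrev : (A * B).charpoly.reverse = (B * A).charpoly.reverse := by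
    rw [Matrix.reverse_charpoly, Matrix.reverse_charpoly, myCharpolyRev_mul_comm]
  have hd1 : (A * B).charpoly.natDegree = Fintype.card m := charpoly_natDegree_eq_dim _
  have hd2 : (B * A).charpoly.natDegree = Fintype.card m := charpoly_natDegree_eq_dim _
  ext k
  rcases le_or_gt k (Fintype.card m) with hk | hk
  · have e1 : (A * B).charpoly.coeff k = (A * B).charpoly.reverse.coeff (Fintype.card m - k) := by
      rw [Polynomial.coeff_reverse, hd1, Polynomial.revAt_le (Nat.sub_le _ _),
        Nat.sub_sub_self hk]
    have e2 : (B * A).charpoly.coeff k = (B * A).charpoly.reverse.coeff (Fintype.card m - k) := by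
      rw [Polynomial.coeff_reverse, hd2, Polynomial.revAt_le (Nat.sub_le _ _),
        Nat.sub_sub_self hk]
    rw [e1, e2, hrev]
  · rw [Polynomial.coeff_eq_zero_of_natDegree_lt (hd1 ▸ hk),
      Polynomial.coeff_eq_zero_of_natDegree_lt (hd2 ▸ hk)]
variable {m : Type*} [Fintype m] [DecidableEq m] {R : Type*} [CommRing R]

lemma myCharpoly_diagonal (d : m → R) :
    (Matrix.diagonal d).charpoly = ∏ i, (X - C (d i)) := by
  rw [Matrix.charpoly, ← Matrix.det_diagonal]
  congr 1
  ext i j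
  rcases eq_or_ne i j with rfl | h
  · simp [charmatrix_apply_eq]
  · simp [charmatrix_apply_ne _ _ _ h, diagonal_apply_ne _ h]

lemma myCharpoly_diagonal_roots (d : m → ℂ) :
    (Matrix.diagonal d).charpoly.roots = Multiset.map d Finset.univ.val := by
  rw [myCharpoly_diagonal]
  have : ∏ i, (X - C (d i)) = ((Multiset.map d Finset.univ.val).map fun a => X - C a).prod := by
    rw [Multiset.map_map]
    rfl
  rw [this, Polynomial.roots_multiset_prod_X_sub_C]

lemma myCharpoly_hermitian_roots {nn : ℕ} {M : Matrix (Fin nn) (Fin nn) ℂ} (hM : M.IsHermitian) :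
    M.charpoly.roots = Multiset.map (fun i => (hM.eigenvalues i : ℂ)) Finset.univ.val := by
  have hs := hM.spectral_theorem
  have h1 : M.charpoly = (Matrix.diagonal (RCLike.ofReal ∘ hM.eigenvalues)).charpoly := by
    calc M.charpoly
        = ((hM.eigenvectorUnitary : Matrix (Fin nn) (Fin nn) ℂ) *
            (Matrix.diagonal (RCLike.ofReal ∘ hM.eigenvalues) *
              (star hM.eigenvectorUnitary : Matrix (Fin nn) (Fin nn) ℂ))).charpoly := by
          simp only [Unitary.conjStarAlgAut_apply, Unitary.coe_star] at hs
          rw [← Matrix.mul_assoc, ← hs]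
      _ = ((Matrix.diagonal (RCLike.ofReal ∘ hM.eigenvalues) *
              (star hM.eigenvectorUnitary : Matrix (Fin nn) (Fin nn) ℂ)) *
            (hM.eigenvectorUnitary : Matrix (Fin nn) (Fin nn) ℂ)).charpoly :=
          myCharpoly_mul_comm _ _
      _ = (Matrix.diagonal (RCLike.ofReal ∘ hM.eigenvalues)).charpoly := by
          rw [Matrix.mul_assoc, Unitary.coe_star_mul_self, Matrix.mul_one]
  rw [h1, myCharpoly_diagonal_roots]
  rfl

end charpolyLemmas

/-- The eigenvalues of a Hermitian matrix listed in decreasing order: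
`ordEig hA 0 = λ_1 ≥ ordEig hA 1 = λ_2 ≥ …`. -/
noncomputable def ordEig {n : ℕ} {A : Matrix (Fin n) (Fin n) ℂ} (hA : A.IsHermitian) :
    Fin n → ℝ :=
  fun i => hA.eigenvalues (Tuple.sort hA.eigenvalues i.rev)

section analysis

variable {N : ℕ}

/-- The quadratic form of a matrix on Euclidean space. -/
noncomputable def matQuad (M : Matrix (Fin N) (Fin N) ℂ) (x : EuclideanSpace ℂ (Fin N)) : ℝ :=
  RCLike.re (inner (𝕜 := ℂ) x (Matrix.toEuclideanLin M x))

lemma matQuad_eq_dot (M : Matrix (Fin N) (Fin N) ℂ) (x : EuclideanSpace ℂ (Fin N)) :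
    matQuad M x = Complex.re (star ((WithLp.equiv 2 (Fin N → ℂ)) x) ⬝ᵥ
      (M *ᵥ (WithLp.equiv 2 (Fin N → ℂ)) x)) := by
  rw [matQuad, Matrix.toEuclideanLin_apply, EuclideanSpace.inner_eq_star_dotProduct]
  simp
  rw [dotProduct_comm]

lemma toEuclideanLin_eigenvectorBasis {M : Matrix (Fin N) (Fin N) ℂ} (hM : M.IsHermitian)
    (j : Fin N) :
    Matrix.toEuclideanLin M (hM.eigenvectorBasis j) =
      (hM.eigenvalues j : ℂ) • hM.eigenvectorBasis j := by
  ext i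
  have h := congrFun (hM.mulVec_eigenvectorBasis j) i
  simp only [Pi.smul_apply] at h
  simp only [Matrix.toEuclideanLin_apply, PiLp.smul_apply]
  rw [h]
  simp [Complex.real_smul]

lemma matQuad_eq_sum {M : Matrix (Fin N) (Fin N) ℂ} (hM : M.IsHermitian)
    (x : EuclideanSpace ℂ (Fin N)) :
    matQuad M x = ∑ j, hM.eigenvalues j * ‖hM.eigenvectorBasis.repr x j‖ ^ 2 := by
  set v := hM.eigenvectorBasis with hv
  have hx : ∑ j, v.repr x j • v j = x := v.sum_repr x
  have hTx : Matrix.toEuclideanLin M x = ∑ j, (v.repr x j * hM.eigenvalues j) • v j := by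
    conv_lhs => rw [← hx, map_sum]
    refine Finset.sum_congr rfl fun j _ => ?_
    rw [LinearMap.map_smul, toEuclideanLin_eigenvectorBasis hM j, smul_smul]
  rw [matQuad, hTx, inner_sum]
  rw [map_sum]
  refine Finset.sum_congr rfl fun j _ => ?_
  rw [inner_smul_right]
  have hxj : inner (𝕜 := ℂ) x (v j) = starRingEnd ℂ (v.repr x j) := by
    rw [← inner_conj_symm, ← v.repr_apply_apply]
  rw [hxj]
  have : v.repr x j * (hM.eigenvalues j : ℂ) * starRingEnd ℂ (v.repr x j)
      = ((hM.eigenvalues j * ‖v.repr x j‖ ^ 2 : ℝ) : ℂ) := by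
    rw [mul_comm (v.repr x j), mul_assoc, Complex.mul_conj, Complex.normSq_eq_norm_sq]
    push_cast
    ring
  rw [this]
  exact Complex.ofReal_re _

lemma norm_sq_eq_sum_repr (b : OrthonormalBasis (Fin N) ℂ (EuclideanSpace ℂ (Fin N)))
    (x : EuclideanSpace ℂ (Fin N)) : ‖x‖ ^ 2 = ∑ j, ‖b.repr x j‖ ^ 2 := by
  rw [← b.repr.norm_map x, EuclideanSpace.norm_eq, Real.sq_sqrt (by positivity)]

lemma repr_eq_zero_of_mem_span (b : OrthonormalBasis (Fin N) ℂ (EuclideanSpace ℂ (Fin N)))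
    (s : Set (Fin N)) (x : EuclideanSpace ℂ (Fin N))
    (hx : x ∈ Submodule.span ℂ (b '' s)) {j : Fin N} (hj : j ∉ s) : b.repr x j = 0 := by
  rw [b.repr_apply_apply]
  induction hx using Submodule.span_induction with
  | mem y hy =>
      obtain ⟨k, hk, rfl⟩ := hy
      exact b.orthonormal.2 (fun h => hj (h ▸ hk))
  | zero => exact inner_zero_right _
  | add y z _ _ hy hz => rw [inner_add_right, hy, hz, add_zero]
  | smul a y _ hy => rw [inner_smul_right, hy, mul_zero]

lemma finrank_span_onb_image (b : OrthonormalBasis (Fin N) ℂ (EuclideanSpace ℂ (Fin N)))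
    (s : Finset (Fin N)) :
    finrank ℂ (Submodule.span ℂ (b '' (s : Set (Fin N)))) = s.card := by
  have hli : LinearIndependent ℂ (fun k : {k // k ∈ s} => b k) :=
    (b.orthonormal.linearIndependent).comp Subtype.val Subtype.val_injective
  have hrange : Set.range (fun k : {k // k ∈ s} => b k) = b '' (s : Set (Fin N)) := by
    ext y
    simp
  rw [← hrange, finrank_span_eq_card hli, Fintype.card_coe]

lemma exists_ne_zero_mem_inf (S T : Submodule ℂ (EuclideanSpace ℂ (Fin N)))
    (h : N < finrank ℂ S + finrank ℂ T) :
    ∃ x : EuclideanSpace ℂ (Fin N), x ≠ 0 ∧ x ∈ S ∧ x ∈ T := by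
  have hE : finrank ℂ (EuclideanSpace ℂ (Fin N)) = N := by
    simp [finrank_euclideanSpace]
  have hsup : finrank ℂ ↥(S ⊔ T) ≤ N := le_trans (Submodule.finrank_le _) (le_of_eq hE)
  have hinf : 0 < finrank ℂ ↥(S ⊓ T) := by
    have := Submodule.finrank_sup_add_finrank_inf_eq S T
    omega
  have hnb : S ⊓ T ≠ ⊥ := by
    intro hbot
    rw [hbot, finrank_bot] at hinf
    exact lt_irrefl _ hinf
  obtain ⟨x, hxM, hx0⟩ := Submodule.exists_mem_ne_zero_of_ne_bot hnb
  exact ⟨x, hx0, hxM.1, hxM.2⟩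

variable {N : ℕ} {M : Matrix (Fin N) (Fin N) ℂ}

lemma ordEig_antitone (hM : M.IsHermitian) : Antitone (ordEig hM) := fun a b hab =>
  Tuple.monotone_sort hM.eigenvalues (Fin.rev_le_rev.mpr hab)

lemma ordEig_surj (hM : M.IsHermitian) (j : Fin N) :
    ∃ i, ordEig hM i = hM.eigenvalues j :=
  ⟨((Tuple.sort hM.eigenvalues).symm j).rev, by simp [ordEig, Fin.rev_rev]⟩

lemma eigenvalues_le_ordEig_zero (hM : M.IsHermitian) (hn : 0 < N) (j : Fin N) :
    hM.eigenvalues j ≤ ordEig hM ⟨0, hn⟩ := by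
  obtain ⟨i, hi⟩ := ordEig_surj hM j
  exact hi ▸ ordEig_antitone hM (by simp [Fin.le_def])

lemma ordEig_last_le_eigenvalues (hM : M.IsHermitian) (hn : 0 < N) (j : Fin N) :
    ordEig hM ⟨N - 1, Nat.sub_lt hn one_pos⟩ ≤ hM.eigenvalues j := by
  obtain ⟨i, hi⟩ := ordEig_surj hM j
  refine hi ▸ ordEig_antitone hM ?_
  have := i.isLt
  simp only [Fin.le_def]
  omega

lemma multiset_map_ordEig (hM : M.IsHermitian) (f : ℝ → ℂ) :
    Multiset.map (fun i => f (ordEig hM i)) Finset.univ.val =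
      Multiset.map (fun i => f (hM.eigenvalues i)) Finset.univ.val := by
  set e : Equiv.Perm (Fin N) := Fin.revPerm.trans (Tuple.sort hM.eigenvalues) with he
  have h1 : (fun i => f (ordEig hM i)) = (fun i => f (hM.eigenvalues i)) ∘ e := rfl
  rw [h1, ← Multiset.map_map]
  congr 1
  have := Finset.map_univ_equiv e
  calc Multiset.map (⇑e) Finset.univ.val = (Finset.univ.map e.toEmbedding).val := by
        rw [Finset.map_val]; rfl
    _ = Finset.univ.val := by rw [this]

lemma cf_exists_le (hM : M.IsHermitian) (i : Fin N) (S : Submodule ℂ (EuclideanSpace ℂ (Fin N)))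
    (hS : finrank ℂ S = i.val + 1) :
    ∃ x : EuclideanSpace ℂ (Fin N), x ∈ S ∧ x ≠ 0 ∧ matQuad M x ≤ ordEig hM i * ‖x‖ ^ 2 := by
  classical
  set σ := Tuple.sort hM.eigenvalues with hσ
  set v := hM.eigenvectorBasis with hv
  set s : Finset (Fin N) := (Finset.Iic i.rev).image σ with hs
  have hcard : s.card = N - i.val := by
    rw [hs, Finset.card_image_of_injective _ σ.injective, Fin.card_Iic, Fin.val_rev]
    have := i.isLt
    omega
  set T := Submodule.span ℂ (v '' (s : Set (Fin N))) with hT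
  have hTd : finrank ℂ T = N - i.val := by rw [hT, finrank_span_onb_image, hcard]
  obtain ⟨x, hx0, hxS, hxT⟩ := exists_ne_zero_mem_inf S T (by
    rw [hS, hTd]
    have := i.isLt
    omega)
  refine ⟨x, hxS, hx0, ?_⟩
  rw [matQuad_eq_sum hM, norm_sq_eq_sum_repr v, Finset.mul_sum]
  refine Finset.sum_le_sum fun j _ => ?_
  by_cases hj : j ∈ s
  · obtain ⟨k, hk, rfl⟩ := Finset.mem_image.mp hj
    have hle : hM.eigenvalues (σ k) ≤ ordEig hM i :=
      Tuple.monotone_sort hM.eigenvalues (Finset.mem_Iic.mp hk)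
    exact mul_le_mul_of_nonneg_right hle (sq_nonneg _)
  · rw [repr_eq_zero_of_mem_span v (s : Set (Fin N)) x hxT hj]
    simp

lemma cf_forall_ge (hM : M.IsHermitian) (i : Fin N) :
    ∃ S : Submodule ℂ (EuclideanSpace ℂ (Fin N)), finrank ℂ S = i.val + 1 ∧
      ∀ x ∈ S, ordEig hM i * ‖x‖ ^ 2 ≤ matQuad M x := by
  classical
  set σ := Tuple.sort hM.eigenvalues with hσ
  set v := hM.eigenvectorBasis with hv
  set s : Finset (Fin N) := (Finset.Ici i.rev).image σ with hs
  have hcard : s.card = i.val + 1 := by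
    rw [hs, Finset.card_image_of_injective _ σ.injective, Fin.card_Ici, Fin.val_rev]
    have := i.isLt
    omega
  refine ⟨Submodule.span ℂ (v '' (s : Set (Fin N))), by rw [finrank_span_onb_image, hcard], ?_⟩
  intro x hx
  rw [matQuad_eq_sum hM, norm_sq_eq_sum_repr v, Finset.mul_sum]
  refine Finset.sum_le_sum fun j _ => ?_
  by_cases hj : j ∈ s
  · obtain ⟨k, hk, rfl⟩ := Finset.mem_image.mp hj
    have hle : ordEig hM i ≤ hM.eigenvalues (σ k) :=
      Tuple.monotone_sort hM.eigenvalues (Finset.mem_Ici.mp hk)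
    exact mul_le_mul_of_nonneg_right hle (sq_nonneg _)
  · rw [repr_eq_zero_of_mem_span v (s : Set (Fin N)) x hx hj]
    simp

lemma ordEig_le_smul (hC : M.IsHermitian) {A : Matrix (Fin N) (Fin N) ℂ} (hA : A.IsHermitian)
    {c : ℝ} (hc : 0 ≤ c) (h : ∀ x : EuclideanSpace ℂ (Fin N), matQuad M x ≤ c * matQuad A x)
    (i : Fin N) : ordEig hC i ≤ c * ordEig hA i := by
  obtain ⟨S, hSd, hSq⟩ := cf_forall_ge hC i
  obtain ⟨x, hxS, hx0, hxq⟩ := cf_exists_le hA i S hSd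
  have hn : (0 : ℝ) < ‖x‖ ^ 2 := pow_pos (norm_pos_iff.mpr hx0) 2
  have key : ordEig hC i * ‖x‖ ^ 2 ≤ c * ordEig hA i * ‖x‖ ^ 2 := by
    calc ordEig hC i * ‖x‖ ^ 2 ≤ matQuad M x := hSq x hxS
      _ ≤ c * matQuad A x := h x
      _ ≤ c * (ordEig hA i * ‖x‖ ^ 2) := mul_le_mul_of_nonneg_left hxq hc
      _ = c * ordEig hA i * ‖x‖ ^ 2 := by ring
  exact le_of_mul_le_mul_right key hn

lemma smul_le_ordEig (hC : M.IsHermitian) {A : Matrix (Fin N) (Fin N) ℂ} (hA : A.IsHermitian)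
    {c : ℝ} (hc : 0 ≤ c) (h : ∀ x : EuclideanSpace ℂ (Fin N), c * matQuad A x ≤ matQuad M x)
    (i : Fin N) : c * ordEig hA i ≤ ordEig hC i := by
  obtain ⟨S, hSd, hSq⟩ := cf_forall_ge hA i
  obtain ⟨x, hxS, hx0, hxq⟩ := cf_exists_le hC i S hSd
  have hn : (0 : ℝ) < ‖x‖ ^ 2 := pow_pos (norm_pos_iff.mpr hx0) 2
  have key : c * ordEig hA i * ‖x‖ ^ 2 ≤ ordEig hC i * ‖x‖ ^ 2 := by
    calc c * ordEig hA i * ‖x‖ ^ 2 = c * (ordEig hA i * ‖x‖ ^ 2) := by ring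
      _ ≤ c * matQuad A x := mul_le_mul_of_nonneg_left (hSq x hxS) hc
      _ ≤ matQuad M x := h x
      _ ≤ ordEig hC i * ‖x‖ ^ 2 := hxq
  exact le_of_mul_le_mul_right key hn

lemma matQuad_conj (Q B : Matrix (Fin N) (Fin N) ℂ) (hQ : Q.IsHermitian)
    (x : EuclideanSpace ℂ (Fin N)) :
    matQuad (Q * B * Q) x = matQuad B (Matrix.toEuclideanLin Q x) := by
  rw [matQuad_eq_dot, matQuad_eq_dot]
  congr 1
  have hy : (WithLp.equiv 2 (Fin N → ℂ)) (Matrix.toEuclideanLin Q x) =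
      Q *ᵥ (WithLp.equiv 2 (Fin N → ℂ)) x := rfl
  rw [hy]
  set x' := (WithLp.equiv 2 (Fin N → ℂ)) x
  rw [star_mulVec, hQ.eq, mul_assoc, ← Matrix.mulVec_mulVec, ← Matrix.mulVec_mulVec,
    Matrix.dotProduct_mulVec (star x') Q]

lemma matQuad_sq (Q : Matrix (Fin N) (Fin N) ℂ) (hQ : Q.IsHermitian)
    (x : EuclideanSpace ℂ (Fin N)) :
    matQuad (Q * Q) x = ‖Matrix.toEuclideanLin Q x‖ ^ 2 := by
  rw [← inner_self_eq_norm_sq (𝕜 := ℂ), matQuad_eq_dot,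
    EuclideanSpace.inner_eq_star_dotProduct]
  have hy : (Matrix.toEuclideanLin Q x).ofLp =
      Q *ᵥ (WithLp.equiv 2 (Fin N → ℂ)) x := rfl
  rw [dotProduct_comm ((Matrix.toEuclideanLin Q x).ofLp), hy]
  set x' := (WithLp.equiv 2 (Fin N → ℂ)) x
  rw [star_mulVec, hQ.eq, ← Matrix.mulVec_mulVec, Matrix.dotProduct_mulVec (star x') Q]
  rfl

lemma matQuad_le_max {B : Matrix (Fin N) (Fin N) ℂ} (hB : B.IsHermitian) (hn : 0 < N)
    (y : EuclideanSpace ℂ (Fin N)) : matQuad B y ≤ ordEig hB ⟨0, hn⟩ * ‖y‖ ^ 2 := by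
  rw [matQuad_eq_sum hB, norm_sq_eq_sum_repr hB.eigenvectorBasis, Finset.mul_sum]
  exact Finset.sum_le_sum fun j _ =>
    mul_le_mul_of_nonneg_right (eigenvalues_le_ordEig_zero hB hn j) (sq_nonneg _)

lemma min_le_matQuad {B : Matrix (Fin N) (Fin N) ℂ} (hB : B.IsHermitian) (hn : 0 < N)
    (y : EuclideanSpace ℂ (Fin N)) :
    ordEig hB ⟨N - 1, Nat.sub_lt hn one_pos⟩ * ‖y‖ ^ 2 ≤ matQuad B y := by
  rw [matQuad_eq_sum hB, norm_sq_eq_sum_repr hB.eigenvectorBasis, Finset.mul_sum]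
  exact Finset.sum_le_sum fun j _ =>
    mul_le_mul_of_nonneg_right (ordEig_last_le_eigenvalues hB hn j) (sq_nonneg _)

end analysis

/-- If `A` and `B` are `n × n` Hermitian positive semidefinite complex matrices, then the
eigenvalues of `A * B` (the roots of its characteristic polynomial) are real and nonnegative,
and, listed in decreasing order `μ`, satisfy `λ_i(A) λ_n(B) ≤ μ_i = λ_i(AB) ≤ λ_i(A) λ_1(B)`. -/
theorem stmt_4 (n : ℕ) (hn : 0 < n) (A B : Matrix (Fin n) (Fin n) ℂ)
    (hA : A.PosSemidef) (hB : B.PosSemidef) :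
    ∃ μ : Fin n → ℝ, Antitone μ ∧
      (A * B).charpoly.roots = Multiset.map (fun i => (μ i : ℂ)) Finset.univ.val ∧
      ∀ i : Fin n, 0 ≤ μ i ∧
        ordEig hA.1 i * ordEig hB.1 ⟨n - 1, Nat.sub_lt hn one_pos⟩ ≤ μ i ∧
        μ i ≤ ordEig hA.1 i * ordEig hB.1 ⟨0, hn⟩ := by
  classical
  open scoped MatrixOrder in
  set Q := CFC.sqrt A with hQdef
  have hQps : Q.PosSemidef := by
    open scoped MatrixOrder in exact (CFC.sqrt_nonneg A).posSemidef
  have hQH : Q.IsHermitian := hQps.1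
  have hQQ : Q * Q = A := by
    open scoped MatrixOrder in exact CFC.sqrt_mul_sqrt_self A hA.nonneg
  have hCps : (Q * B * Q).PosSemidef := by
    have := hB.conjTranspose_mul_mul_same Q
    rwa [hQH.eq] at this
  have hCH := hCps.1
  have hmax : (0 : ℝ) ≤ ordEig hB.1 ⟨0, hn⟩ := hB.eigenvalues_nonneg _
  have hmin : (0 : ℝ) ≤ ordEig hB.1 ⟨n - 1, Nat.sub_lt hn one_pos⟩ := hB.eigenvalues_nonneg _
  refine ⟨ordEig hCH, ordEig_antitone hCH, ?_, ?_⟩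
  · have hch : (A * B).charpoly = (Q * B * Q).charpoly := by
      calc (A * B).charpoly = (Q * (Q * B)).charpoly := by rw [← hQQ, mul_assoc]
        _ = ((Q * B) * Q).charpoly := myCharpoly_mul_comm _ _
        _ = (Q * B * Q).charpoly := rfl
    rw [hch, myCharpoly_hermitian_roots hCH]
    exact (multiset_map_ordEig hCH (fun r => (r : ℂ))).symm
  · intro i
    refine ⟨hCps.eigenvalues_nonneg _, ?_, ?_⟩
    · have h := smul_le_ordEig hCH hA.1 hmin (fun x => by
        rw [matQuad_conj Q B hQH x, ← hQQ, matQuad_sq Q hQH x]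
        exact min_le_matQuad hB.1 hn _) i
      rw [mul_comm]
      exact h
    · have h := ordEig_le_smul hCH hA.1 hmax (fun x => by
        rw [matQuad_conj Q B hQH x, ← hQQ, matQuad_sq Q hQH x]
        exact matQuad_le_max hB.1 hn _) i
      rw [mul_comm (ordEig hA.1 i)]
      exact h
end

section
/- Let X be an M×T and H an N×M complex matrix. For each i ≤ min(M,N,T), λ_i(X X^H H^H H) ≤ λ_i(X X^H) · ‖H‖_F², where eigenvalues are in decreasing order. -/
open ComplexOrder Matrix

open Polynomial

section
open scoped MatrixOrder

noncomputable def Matrix.PosSemidef.sqrt {n : ℕ} {B : Matrix (Fin n) (Fin n) ℂ}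
    (_ : B.PosSemidef) : Matrix (Fin n) (Fin n) ℂ := CFC.sqrt B

lemma Matrix.PosSemidef.posSemidef_sqrt {n : ℕ} {B : Matrix (Fin n) (Fin n) ℂ}
    (hB : B.PosSemidef) : hB.sqrt.PosSemidef := (CFC.sqrt_nonneg B).posSemidef

lemma Matrix.PosSemidef.sqrt_mul_self {n : ℕ} {B : Matrix (Fin n) (Fin n) ℂ}
    (hB : B.PosSemidef) : hB.sqrt * hB.sqrt = B := CFC.sqrt_mul_sqrt_self B hB.nonneg

end

lemma charpoly_smul_one_sub {n : Type*} [Fintype n] [DecidableEq n] {K : Type*} [Field K]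
    (A B : Matrix n n K) {t : K} (ht : t ≠ 0) :
    det (t • (1 : Matrix n n K) - A * B) = det (t • (1 : Matrix n n K) - B * A) := by
  have h1 : t • (1 : Matrix n n K) - A * B = t • ((1 : Matrix n n K) - (t⁻¹ • A) * B) := by
    rw [smul_sub, Matrix.smul_mul, smul_smul, mul_inv_cancel₀ ht, one_smul]
  have h2 : t • (1 : Matrix n n K) - B * A = t • ((1 : Matrix n n K) - B * (t⁻¹ • A)) := by
    rw [smul_sub, Matrix.mul_smul, smul_smul, mul_inv_cancel₀ ht, one_smul]
  rw [h1, h2, det_smul, det_smul, Matrix.det_one_sub_mul_comm]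

lemma charpoly_mul_comm {n : Type*} [Fintype n] [DecidableEq n] {K : Type*} [Field K]
    (A B : Matrix n n K) : (A * B).charpoly = (B * A).charpoly := by
  set φ : K[X] →+* RatFunc K := algebraMap K[X] (RatFunc K) with hφ
  have hinj : Function.Injective φ := IsFractionRing.injective K[X] (RatFunc K)
  apply hinj
  have hmapc : ∀ M : Matrix n n K, φ M.charpoly =
      det (Matrix.scalar n (φ X) - (M.map (φ.comp C))) := by
    intro M
    rw [Matrix.charpoly, RingHom.map_det]
    congr 1
    ext i j
    simp [Matrix.charmatrix_apply, Matrix.scalar_apply, Matrix.diagonal_apply, Matrix.map_apply,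
      apply_ite φ, Matrix.sub_apply]
  have hX : φ X ≠ 0 := by
    intro h
    exact X_ne_zero (R := K) (hinj (by rw [h, map_zero]))
  rw [hmapc, hmapc]
  have hmul : ∀ P Q : Matrix n n K, (P * Q).map (φ.comp C) = P.map (φ.comp C) * Q.map (φ.comp C) :=
    fun P Q => Matrix.map_mul
  rw [hmul, hmul]
  have := charpoly_smul_one_sub (A.map (φ.comp C)) (B.map (φ.comp C)) hX
  simpa [Matrix.smul_one_eq_diagonal, Matrix.scalar, Pi.algebraMap_def] using this

lemma charpoly_diagonal {n : Type*} [Fintype n] [DecidableEq n] {K : Type*} [Field K]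
    (d : n → K) : (Matrix.diagonal d).charpoly = ∏ i, (X - C (d i)) := by
  rw [Matrix.charpoly]
  have : (Matrix.diagonal d).charmatrix = Matrix.diagonal (fun i => (X : K[X]) - C (d i)) := by
    ext i j
    by_cases h : i = j
    · subst h; simp [Matrix.charmatrix_apply, Matrix.diagonal_apply]
    · simp [Matrix.charmatrix_apply_ne _ _ _ h, Matrix.diagonal_apply_ne _ h,
        Matrix.diagonal_apply_ne' _ (Ne.symm h ∘ Eq.symm ∘ Eq.symm) ]
  rw [this, Matrix.det_diagonal]

lemma herm_charpoly_roots {n : ℕ} {A : Matrix (Fin n) (Fin n) ℂ} (hA : A.IsHermitian) :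
    A.charpoly.roots = Multiset.map (fun i => (hA.eigenvalues i : ℂ)) Finset.univ.val := by
  have hV := hA.spectral_theorem
  set V : Matrix (Fin n) (Fin n) ℂ := ↑hA.eigenvectorUnitary with hVdef
  have hrw : A.charpoly = (Matrix.diagonal (RCLike.ofReal ∘ hA.eigenvalues) : Matrix (Fin n) (Fin n) ℂ).charpoly := by
    conv_lhs => rw [hV, Unitary.conjStarAlgAut_apply]
    rw [mul_assoc, _root_.charpoly_mul_comm, mul_assoc,
      Matrix.mem_unitaryGroup_iff'.mp hA.eigenvectorUnitary.2, mul_one]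
  rw [hrw, _root_.charpoly_diagonal]
  have : (∏ i, (X - C ((RCLike.ofReal ∘ hA.eigenvalues) i)) : ℂ[X]) =
      ((Finset.univ.val.map (fun i => (hA.eigenvalues i : ℂ))).map (fun a => X - C a)).prod := by
    rw [Multiset.map_map]
    rfl
  rw [this, Polynomial.roots_multiset_prod_X_sub_C]

lemma star_dot_self {n : ℕ} (v : Fin n → ℂ) :
    star v ⬝ᵥ v = ((∑ j, ‖v j‖^2 : ℝ) : ℂ) := by
  push_cast
  apply Finset.sum_congr rfl
  intro j _
  simp [Pi.star_apply, Complex.star_def, Complex.conj_mul']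

lemma unitary_norm_preserve {n : ℕ} {U : Matrix (Fin n) (Fin n) ℂ}
    (hU : U ∈ Matrix.unitaryGroup (Fin n) ℂ) (v : Fin n → ℂ) :
    ∑ j, ‖(U *ᵥ v) j‖^2 = ∑ j, ‖v j‖^2 := by
  have h : star (U *ᵥ v) ⬝ᵥ (U *ᵥ v) = star v ⬝ᵥ v := by
    rw [Matrix.star_mulVec, Matrix.dotProduct_mulVec, Matrix.vecMul_vecMul,
      ← Matrix.star_eq_conjTranspose]
    rw [(Matrix.mem_unitaryGroup_iff'.mp hU : star U * U = 1)]
    simp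
  have := (star_dot_self (U *ᵥ v)).symm.trans (h.trans (star_dot_self v))
  exact_mod_cast this

lemma quadform_eq {n : ℕ} {D : Matrix (Fin n) (Fin n) ℂ} (hD : D.IsHermitian)
    (c : Fin n → ℂ) :
    star ((hD.eigenvectorUnitary : Matrix (Fin n) (Fin n) ℂ) *ᵥ c) ⬝ᵥ
      (D *ᵥ ((hD.eigenvectorUnitary : Matrix (Fin n) (Fin n) ℂ) *ᵥ c)) =
    ((∑ j, hD.eigenvalues j * ‖c j‖^2 : ℝ) : ℂ) := by
  set V : Matrix (Fin n) (Fin n) ℂ := ↑hD.eigenvectorUnitary with hVdef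
  have hDx : D *ᵥ (V *ᵥ c) = V *ᵥ (Matrix.diagonal (RCLike.ofReal ∘ hD.eigenvalues) *ᵥ c) := by
    conv_lhs => rw [hD.spectral_theorem, Unitary.conjStarAlgAut_apply]
    simp only [← Matrix.mulVec_mulVec]
    rw [Matrix.mulVec_mulVec c (star V) V,
      Matrix.mem_unitaryGroup_iff'.mp hD.eigenvectorUnitary.2, Matrix.one_mulVec]
  rw [hDx, Matrix.star_mulVec, Matrix.dotProduct_mulVec, Matrix.vecMul_vecMul,
    ← Matrix.star_eq_conjTranspose, (Matrix.mem_unitaryGroup_iff'.mp hD.eigenvectorUnitary.2 :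
      star V * V = 1), Matrix.vecMul_one]
  push_cast
  simp only [dotProduct, Matrix.mulVec_diagonal]
  apply Finset.sum_congr rfl
  intro j _
  simp only [Pi.star_apply, Function.comp_apply, RCLike.ofReal_alg]
  rw [Complex.star_def, Complex.real_smul, mul_one]
  rw [show (starRingEnd ℂ) (c j) * ((hD.eigenvalues j : ℂ) * c j)
      = (hD.eigenvalues j : ℂ) * ((starRingEnd ℂ) (c j) * c j) by ring,
    Complex.conj_mul']

lemma ordEig_antitone' {n : ℕ} {A : Matrix (Fin n) (Fin n) ℂ} (hA : A.IsHermitian) :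
    Antitone (fun i : Fin n => hA.eigenvalues (Tuple.sort hA.eigenvalues i.rev)) := by
  intro i j hij
  exact Tuple.monotone_sort hA.eigenvalues (Fin.rev_le_rev.mpr hij)

lemma sum_extend_zero {α γ : Type*} [Fintype α] {n : ℕ} [AddCommMonoid γ]
    {ι : α → Fin n} (hι : Function.Injective ι) (d : α → ℂ) (g : Fin n → ℂ → γ)
    (hg : ∀ k, g k 0 = 0) :
    ∑ k, g k (Function.extend ι d 0 k) = ∑ t, g (ι t) (d t) := by
  rw [show (Finset.univ : Finset (Fin n)) = Finset.univ from rfl]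
  rw [← Finset.sum_subset (Finset.subset_univ (Finset.image ι Finset.univ))
    (fun k _ hk => ?_)]
  · rw [Finset.sum_image (fun x _ y _ h => hι h)]
    exact Finset.sum_congr rfl fun t _ => by rw [hι.extend_apply]
  · have : ¬∃ t, ι t = k := by
      simpa [Finset.mem_image] using hk
    rw [Function.extend_apply' _ _ _ this, Pi.zero_apply, hg]

lemma herm_shift {n : ℕ} {S : Matrix (Fin n) (Fin n) ℂ} (hS : Sᴴ = S) (v w : Fin n → ℂ) :
    star v ⬝ᵥ (S *ᵥ w) = star (S *ᵥ v) ⬝ᵥ w := by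
  rw [Matrix.star_mulVec, hS, Matrix.dotProduct_mulVec]

lemma key_ineq {n : ℕ} {A B : Matrix (Fin n) (Fin n) ℂ}
    (hA : A.PosSemidef) (hB : B.PosSemidef)
    (hC : (hB.sqrt * A * hB.sqrt).IsHermitian)
    {c : ℝ} (hc : ∀ x : Fin n → ℂ, (star x ⬝ᵥ (B *ᵥ x)).re ≤ c * ∑ j, ‖x j‖^2)
    (i : Fin n) :
    hC.eigenvalues (Tuple.sort hC.eigenvalues i.rev) ≤
      hA.1.eigenvalues (Tuple.sort hA.1.eigenvalues i.rev) * c := by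
  set S : Matrix (Fin n) (Fin n) ℂ := hB.sqrt with hSdef
  have hSh : Sᴴ = S := hB.posSemidef_sqrt.1
  have hSS : S * S = B := hB.sqrt_mul_self
  set lC : Fin n → ℝ := hC.eigenvalues with hlC
  set sC : Equiv.Perm (Fin n) := Tuple.sort hC.eigenvalues with hsC
  set VC : Matrix (Fin n) (Fin n) ℂ := ↑hC.eigenvectorUnitary with hVC
  set lA : Fin n → ℝ := hA.1.eigenvalues with hlA
  set sA : Equiv.Perm (Fin n) := Tuple.sort hA.1.eigenvalues with hsA
  set VA : Matrix (Fin n) (Fin n) ℂ := ↑hA.1.eigenvectorUnitary with hVA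
  have hn : 0 < n := i.pos
  have hrv : (i.rev : ℕ) = n - 1 - i.val := by
    rw [Fin.val_rev]; omega
  have hi : i.val < n := i.isLt
  -- index embeddings
  set ι₁ : Fin (i.val + 1) → Fin n :=
    fun t => sC ⟨i.rev.val + t.val, by have := t.isLt; omega⟩ with hι₁
  set ι₂ : Fin i.val → Fin n :=
    fun s => sA ⟨i.rev.val + 1 + s.val, by have := s.isLt; omega⟩ with hι₂
  have hι₁inj : Function.Injective ι₁ := by
    intro t t' h
    have := sC.injective h
    have := Fin.mk.inj_iff.mp this
    exact Fin.ext (by omega)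
  -- the compressed matrix and a nonzero kernel vector
  set F : Matrix (Fin i.val) (Fin (i.val + 1)) ℂ :=
    Matrix.of (fun s t => ((star VA) * S * VC) (ι₂ s) (ι₁ t)) with hF
  obtain ⟨d, hd0, hFd⟩ : ∃ d : Fin (i.val + 1) → ℂ, d ≠ 0 ∧ F *ᵥ d = 0 := by
    have hni : ¬ Function.Injective F.mulVecLin := by
      intro h
      have h2 := LinearMap.finrank_le_finrank_of_injective h
      simp only [Module.finrank_fintype_fun_eq_card, Fintype.card_fin] at h2
      omega
    rw [Function.Injective] at hni
    push_neg at hni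
    obtain ⟨a, b, hfab, hab⟩ := hni
    refine ⟨a - b, sub_ne_zero.mpr hab, ?_⟩
    have : F.mulVecLin (a - b) = 0 := by rw [map_sub, hfab, sub_self]
    simpa [Matrix.mulVecLin_apply] using this
  -- vectors
  set cC : Fin n → ℂ := Function.extend ι₁ d 0 with hcC
  set x : Fin n → ℂ := VC *ᵥ cC with hx
  set y : Fin n → ℂ := S *ᵥ x with hy
  set cA : Fin n → ℂ := (star VA) *ᵥ y with hcA
  -- support of cA avoids ι₂
  have hcA_eq : cA = ((star VA) * S * VC) *ᵥ cC := by
    rw [hcA, hy, hx, Matrix.mulVec_mulVec, Matrix.mulVec_mulVec]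
  have hcA0 : ∀ s : Fin i.val, cA (ι₂ s) = 0 := by
    intro s
    have : cA (ι₂ s) = (F *ᵥ d) s := by
      rw [hcA_eq]
      show dotProduct _ _ = dotProduct _ _
      rw [show ((star VA * S * VC) (ι₂ s)) ⬝ᵥ cC
          = ∑ k, (star VA * S * VC) (ι₂ s) k * cC k from rfl]
      rw [sum_extend_zero hι₁inj d (fun k z => (star VA * S * VC) (ι₂ s) k * z)
        (fun k => mul_zero _)]
      rfl
    rw [this, hFd, Pi.zero_apply]
  -- real sums
  have hSCsum : ∑ k, ‖cC k‖^2 = ∑ t, ‖d t‖^2 :=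
    sum_extend_zero hι₁inj d (fun _ z => ‖z‖^2) (fun _ => by simp)
  have hSCpos : 0 < ∑ t, ‖d t‖^2 := by
    obtain ⟨t, ht⟩ := Function.ne_iff.mp hd0
    refine Finset.sum_pos' (fun t _ => sq_nonneg _) ⟨t, Finset.mem_univ t, ?_⟩
    have hdt : d t ≠ 0 := by simpa using ht
    exact pow_pos (norm_pos_iff.mpr hdt) 2
  -- lower bound on C side
  have h1 : (lC (sC i.rev)) * ∑ k, ‖cC k‖^2 ≤ ∑ k, lC k * ‖cC k‖^2 := by
    rw [Finset.mul_sum]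
    apply Finset.sum_le_sum
    intro k _
    by_cases hk : cC k = 0
    · simp [hk]
    · have hex : ∃ t, ι₁ t = k := by
        by_contra h
        exact hk (by rw [hcC, Function.extend_apply' _ _ _ h, Pi.zero_apply])
      obtain ⟨t, rfl⟩ := hex
      have hle : lC (sC i.rev) ≤ lC (ι₁ t) := by
        have hle2 : i.rev ≤ (⟨i.rev.val + t.val, by have := t.isLt; omega⟩ : Fin n) := by
          rw [Fin.le_def]
          exact Nat.le_add_right _ _
        exact Tuple.monotone_sort hC.eigenvalues hle2
      exact mul_le_mul_of_nonneg_right hle (sq_nonneg _)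
  -- upper bound on A side
  have h3 : ∑ k, lA k * ‖cA k‖^2 ≤ (lA (sA i.rev)) * ∑ k, ‖cA k‖^2 := by
    rw [Finset.mul_sum]
    apply Finset.sum_le_sum
    intro k _
    by_cases hk : cA k = 0
    · simp [hk]
    · obtain ⟨j, rfl⟩ : ∃ j, sA j = k := ⟨sA.symm k, sA.apply_symm_apply k⟩
      have hjr : j.val ≤ i.rev.val := by
        by_contra h
        push_neg at h
        have hs : sA j = ι₂ ⟨j.val - i.rev.val - 1, by have := j.isLt; omega⟩ := by
          rw [hι₂]
          refine congrArg sA (Fin.ext ?_)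
          have := j.isLt
          simp
          omega
        exact hk (by rw [hs]; exact hcA0 _)
      have hle : lA (sA j) ≤ lA (sA i.rev) :=
        Tuple.monotone_sort hA.1.eigenvalues (by rw [Fin.le_def]; omega)
      exact mul_le_mul_of_nonneg_right hle (sq_nonneg _)
  -- quadratic form identities
  have hQC : star x ⬝ᵥ ((hB.sqrt * A * hB.sqrt) *ᵥ x) = ((∑ k, lC k * ‖cC k‖^2 : ℝ) : ℂ) := by
    rw [hx]; exact quadform_eq hC cC
  have hQA : star y ⬝ᵥ (A *ᵥ y) = ((∑ k, lA k * ‖cA k‖^2 : ℝ) : ℂ) := by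
    have hyVA : VA *ᵥ cA = y := by
      rw [hcA, Matrix.mulVec_mulVec,
        Matrix.mem_unitaryGroup_iff.mp hA.1.eigenvectorUnitary.2, Matrix.one_mulVec]
    have h5 := quadform_eq hA.1 cA
    rw [hyVA] at h5
    exact h5
  have hbridge : star x ⬝ᵥ ((hB.sqrt * A * hB.sqrt) *ᵥ x) = star y ⬝ᵥ (A *ᵥ y) := by
    calc star x ⬝ᵥ ((hB.sqrt * A * hB.sqrt) *ᵥ x)
        = star x ⬝ᵥ (S *ᵥ (A *ᵥ (S *ᵥ x))) := by
          rw [show hB.sqrt * A * hB.sqrt = S * A * S from rfl,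
            ← Matrix.mulVec_mulVec, ← Matrix.mulVec_mulVec]
      _ = star (S *ᵥ x) ⬝ᵥ (A *ᵥ (S *ᵥ x)) := herm_shift hSh x _
      _ = star y ⬝ᵥ (A *ᵥ y) := by rw [hy]
  have hQCA : (∑ k, lC k * ‖cC k‖^2 : ℝ) = ∑ k, lA k * ‖cA k‖^2 := by
    have h7 := hQC.symm.trans (hbridge.trans hQA)
    exact_mod_cast h7
  -- norm relations
  have hNx : ∑ j, ‖x j‖^2 = ∑ k, ‖cC k‖^2 := by
    rw [hx]; exact unitary_norm_preserve hC.eigenvectorUnitary.2 cC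
  have hNcA : ∑ k, ‖cA k‖^2 = ∑ j, ‖y j‖^2 := by
    rw [hcA]
    exact unitary_norm_preserve (Unitary.star_mem hA.1.eigenvectorUnitary.2) y
  have hNy : ∑ j, ‖y j‖^2 ≤ c * ∑ j, ‖x j‖^2 := by
    have h8 : star y ⬝ᵥ y = star x ⬝ᵥ (B *ᵥ x) := by
      rw [hy, ← herm_shift hSh x (S *ᵥ x), Matrix.mulVec_mulVec, hSS]
    have h9 : ((∑ j, ‖y j‖^2 : ℝ) : ℂ) = star x ⬝ᵥ (B *ᵥ x) := (star_dot_self y).symm.trans h8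
    have h10 : (∑ j, ‖y j‖^2 : ℝ) = (star x ⬝ᵥ (B *ᵥ x)).re := by
      rw [← h9, Complex.ofReal_re]
    rw [h10]
    exact hc x
  have hμA : 0 ≤ lA (sA i.rev) := hA.eigenvalues_nonneg _
  have main : lC (sC i.rev) * (∑ k, ‖cC k‖^2) ≤ (lA (sA i.rev) * c) * (∑ k, ‖cC k‖^2) := by
    calc lC (sC i.rev) * (∑ k, ‖cC k‖^2) ≤ ∑ k, lC k * ‖cC k‖^2 := h1
    _ = ∑ k, lA k * ‖cA k‖^2 := hQCA
    _ ≤ lA (sA i.rev) * ∑ k, ‖cA k‖^2 := h3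
    _ = lA (sA i.rev) * ∑ j, ‖y j‖^2 := by rw [hNcA]
    _ ≤ lA (sA i.rev) * (c * ∑ j, ‖x j‖^2) := mul_le_mul_of_nonneg_left hNy hμA
    _ = (lA (sA i.rev) * c) * (∑ k, ‖cC k‖^2) := by rw [hNx]; ring
  have hpos : 0 < ∑ k, ‖cC k‖^2 := by rw [hSCsum]; exact hSCpos
  exact le_of_mul_le_mul_right main hpos

/-- For `X` an `M × T` and `H` an `N × M` complex matrix, the eigenvalues of
`X Xᴴ Hᴴ H` are real and nonnegative, and in decreasing order `μ` they satisfy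
`μ_i = λ_i(X Xᴴ Hᴴ H) ≤ λ_i(X Xᴴ) · ‖H‖_F²` for each `i ≤ min(M, N, T)` (1-based). -/
theorem stmt_14 (M N T : ℕ) (X : Matrix (Fin M) (Fin T) ℂ) (H : Matrix (Fin N) (Fin M) ℂ) :
    ∃ μ : Fin M → ℝ, Antitone μ ∧
      (X * Xᴴ * (Hᴴ * H)).charpoly.roots = Multiset.map (fun i => (μ i : ℂ)) Finset.univ.val ∧
      (∀ i, 0 ≤ μ i) ∧
      ∀ i : Fin M, i.val + 1 ≤ min M (min N T) →
        μ i ≤ ordEig (Matrix.isHermitian_mul_conjTranspose_self X) i *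
          ∑ k, ∑ l, ‖H k l‖ ^ 2 := by
  have hA : (X * Xᴴ).PosSemidef := Matrix.posSemidef_self_mul_conjTranspose X
  have hB : (Hᴴ * H).PosSemidef := Matrix.posSemidef_conjTranspose_mul_self H
  have hSh : hB.sqrtᴴ = hB.sqrt := hB.posSemidef_sqrt.1
  have hCps : (hB.sqrt * (X * Xᴴ) * hB.sqrt).PosSemidef := by
    have h := hA.mul_mul_conjTranspose_same hB.sqrt
    rwa [hSh] at h
  refine ⟨ordEig hCps.1, ordEig_antitone' hCps.1, ?_, fun i => hCps.eigenvalues_nonneg _, ?_⟩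
  · -- the roots claim
    have hcp : (X * Xᴴ * (Hᴴ * H)).charpoly = (hB.sqrt * (X * Xᴴ) * hB.sqrt).charpoly := by
      have h1 : X * Xᴴ * (Hᴴ * H) = (X * Xᴴ * hB.sqrt) * hB.sqrt := by
        rw [mul_assoc, hB.sqrt_mul_self]
      rw [h1, _root_.charpoly_mul_comm, ← mul_assoc]
    rw [hcp, herm_charpoly_roots hCps.1]
    set e : Fin M ≃ Fin M :=
      (Fin.revPerm).trans (Tuple.sort hCps.1.eigenvalues) with he
    have hee : Multiset.map (⇑e) Finset.univ.val = Finset.univ.val := by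
      have := Finset.map_univ_equiv e
      calc Multiset.map (⇑e) Finset.univ.val = (Finset.univ.map e.toEmbedding).val := rfl
        _ = Finset.univ.val := by rw [this]
    conv_rhs => rw [show (fun i => ((ordEig hCps.1 i : ℝ) : ℂ))
      = (fun k => ((hCps.1.eigenvalues k : ℝ) : ℂ)) ∘ ⇑e from rfl, ← Multiset.map_map, hee]
  · -- the inequality
    intro i _
    have hc : ∀ x : Fin M → ℂ,
        (star x ⬝ᵥ ((Hᴴ * H) *ᵥ x)).re ≤ (∑ k, ∑ l, ‖H k l‖^2) * ∑ j, ‖x j‖^2 := by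
      intro x
      have h1 : star x ⬝ᵥ ((Hᴴ * H) *ᵥ x) = ((∑ k, ‖(H *ᵥ x) k‖^2 : ℝ) : ℂ) := by
        rw [← Matrix.mulVec_mulVec, Matrix.dotProduct_mulVec, ← Matrix.star_mulVec]
        exact star_dot_self (H *ᵥ x)
      rw [h1, Complex.ofReal_re, Finset.sum_mul]
      apply Finset.sum_le_sum
      intro k _
      have h2 : ‖∑ l, H k l * x l‖ ≤ ∑ l, ‖H k l‖ * ‖x l‖ :=
        (norm_sum_le _ _).trans (le_of_eq (Finset.sum_congr rfl fun l _ => norm_mul _ _))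
      have h2' : ‖(H *ᵥ x) k‖ ≤ ∑ l, ‖H k l‖ * ‖x l‖ := by
        simpa [Matrix.mulVec, dotProduct] using h2
      calc ‖(H *ᵥ x) k‖^2 ≤ (∑ l, ‖H k l‖ * ‖x l‖)^2 :=
            pow_le_pow_left₀ (norm_nonneg _) h2' 2
        _ ≤ (∑ l, ‖H k l‖^2) * ∑ l, ‖x l‖^2 :=
            Finset.sum_mul_sq_le_sq_mul_sq _ _ _
    exact key_ineq hA hB hCps.1 hc i
end
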